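/- Let r₂ ⊕ ℂ be the complex Lie algebra with basis e₁,e₂,e₃ and single nonzero bracket [e₁,e₂]=e₂. If f,g : r₂⊕ℂ → r₂⊕ℂ are linear maps satisfying f([a,b]) = [f(a),b] + [a,f(b)] - [a,g(b)] for all a,b, then there exist β₁,...,β₅, γ₁,γ₂,γ₃ ∈ ℂ with f(e₁)=β₁e₁+β₂e₂+β₃e₃, f(e₂)=β₄e₂, f(e₃)=β₅e₃, g(e₁)=β₁e₁+γ₁e₃, g(e₂)=β₁e₂+γ₂e₃, g(e₃)=γ₃e₃. -/

import Mathlib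

/-- Description of the pairs `(f, g)` satisfying the compatibility condition on
`r₂ ⊕ ℂ`: single nonzero bracket `[e₁,e₂]=e₂`. -/
theorem stmt13 {L : Type*} [LieRing L] [LieAlgebra ℂ L]
    (b : Module.Basis (Fin 3) ℂ L)
    (h12 : ⁅b 0, b 1⁆ = b 1) (h13 : ⁅b 0, b 2⁆ = 0)
    (h23 : ⁅b 1, b 2⁆ = 0)
    (f g : L →ₗ[ℂ] L)
    (hfg : ∀ a c : L, f ⁅a, c⁆ = ⁅f a, c⁆ + ⁅a, f c⁆ - ⁅a, g c⁆) :
    ∃ β₁ β₂ β₃ β₄ β₅ γ₁ γ₂ γ₃ : ℂ,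
      f (b 0) = β₁ • b 0 + β₂ • b 1 + β₃ • b 2 ∧
      f (b 1) = β₄ • b 1 ∧
      f (b 2) = β₅ • b 2 ∧
      g (b 0) = β₁ • b 0 + γ₁ • b 2 ∧
      g (b 1) = β₁ • b 1 + γ₂ • b 2 ∧
      g (b 2) = γ₃ • b 2 := by
  have h21 : ⁅b 1, b 0⁆ = -b 1 := by rw [← lie_skew, h12]
  have h31 : ⁅b 2, b 0⁆ = 0 := by rw [← lie_skew, h13, neg_zero]
  have h32 : ⁅b 2, b 1⁆ = 0 := by rw [← lie_skew, h23, neg_zero]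
  have hb : ∀ x : L, x = b.repr x 0 • b 0 + b.repr x 1 • b 1 + b.repr x 2 • b 2 := by
    intro x
    conv_lhs => rw [← b.sum_repr x]
    rw [Fin.sum_univ_three]
  have lr1 : ∀ x : L, ⁅x, b 1⁆ = b.repr x 0 • b 1 := by
    intro x; conv_lhs => rw [hb x]
    simp [add_lie, smul_lie, h12, h32]
  have lr0 : ∀ x : L, ⁅x, b 0⁆ = -(b.repr x 1 • b 1) := by
    intro x; conv_lhs => rw [hb x]
    simp [add_lie, smul_lie, h21, h31]
  have lr2 : ∀ x : L, ⁅x, b 2⁆ = 0 := by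
    intro x; conv_lhs => rw [hb x]
    simp [add_lie, smul_lie, h13, h23]
  have ll0 : ∀ x : L, ⁅b 0, x⁆ = b.repr x 1 • b 1 := by
    intro x; rw [← lie_skew, lr0, neg_neg]
  have ll1 : ∀ x : L, ⁅b 1, x⁆ = -(b.repr x 0 • b 1) := by
    intro x; rw [← lie_skew, lr1]
  have ll2 : ∀ x : L, ⁅b 2, x⁆ = 0 := by
    intro x; rw [← lie_skew, lr2, neg_zero]
  -- pair (0,1) : f b1 = F00•b1 + F11•b1 - G11•b1
  have E01 := hfg (b 0) (b 1)
  rw [h12, lr1, ll0, ll0] at E01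
  have e010 : b.repr (f (b 1)) 0 = 0 := by
    have := congrArg (fun x => b.repr x 0) E01
    simpa using this
  have e012 : b.repr (f (b 1)) 2 = 0 := by
    have := congrArg (fun x => b.repr x 2) E01
    simpa using this
  have e011 : b.repr (g (b 1)) 1 = b.repr (f (b 0)) 0 := by
    have := congrArg (fun x => b.repr x 1) E01
    simp at this
    linear_combination this
  -- pair (2,1) : 0 = F20•b1
  have E21 := hfg (b 2) (b 1)
  rw [h32, lr1, ll2, ll2, map_zero] at E21
  have e21 : b.repr (f (b 2)) 0 = 0 := by
    have := congrArg (fun x => b.repr x 1) E21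
    simpa using this.symm
  -- pair (2,0) : 0 = -F21•b1
  have E20 := hfg (b 2) (b 0)
  rw [h31, lr0, ll2, ll2, map_zero] at E20
  have e20 : b.repr (f (b 2)) 1 = 0 := by
    have := congrArg (fun x => b.repr x 1) E20
    simpa using this
  -- pair (1,2) : 0 = -F20•b1 + G20•b1  → G20 = 0
  have E12 := hfg (b 1) (b 2)
  rw [h23, lr2, ll1, ll1, map_zero] at E12
  have e12 : b.repr (g (b 2)) 0 = 0 := by
    have := congrArg (fun x => b.repr x 1) E12
    simp [e21] at this
    exact this.symm
  -- pair (0,2) : 0 = F21•b1 - G21•b1 → G21 = 0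
  have E02 := hfg (b 0) (b 2)
  rw [h13, lr2, ll0, ll0, map_zero] at E02
  have e02 : b.repr (g (b 2)) 1 = 0 := by
    have := congrArg (fun x => b.repr x 1) E02
    simp [e20] at this
    exact this
  -- pair (0,0) : 0 = -F01•b1 + F01•b1 - G01•b1 → G01 = 0
  have E00 := hfg (b 0) (b 0)
  rw [lie_self, map_zero, lr0, ll0, ll0] at E00
  have e00 : b.repr (g (b 0)) 1 = 0 := by
    have := congrArg (fun x => b.repr x 1) E00
    simpa using this
  -- pair (1,1) : 0 = F10•b1 - F10•b1 + G10•b1 → G10 = 0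
  have E11 := hfg (b 1) (b 1)
  rw [lie_self, map_zero, lr1, ll1, ll1] at E11
  have e11 : b.repr (g (b 1)) 0 = 0 := by
    have := congrArg (fun x => b.repr x 1) E11
    simpa using this.symm
  -- pair (1,0) : -f b1 = -F11•b1 - F00•b1 + G00•b1
  have E10 := hfg (b 1) (b 0)
  rw [h21, lr0, ll1, ll1, map_neg] at E10
  have e10 : b.repr (g (b 0)) 0 = b.repr (f (b 0)) 0 := by
    have := congrArg (fun x => b.repr x 1) E10
    simp at this
    linear_combination -this
  refine ⟨b.repr (f (b 0)) 0, b.repr (f (b 0)) 1, b.repr (f (b 0)) 2,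
    b.repr (f (b 1)) 1, b.repr (f (b 2)) 2,
    b.repr (g (b 0)) 2, b.repr (g (b 1)) 2, b.repr (g (b 2)) 2,
    hb (f (b 0)), ?_, ?_, ?_, ?_, ?_⟩
  · conv_lhs => rw [hb (f (b 1))]
    rw [e010, e012]; simp
  · conv_lhs => rw [hb (f (b 2))]
    rw [e21, e20]; simp
  · conv_lhs => rw [hb (g (b 0))]
    rw [e00, e10]; simp
  · conv_lhs => rw [hb (g (b 1))]
    rw [e11, e011]; simp
  · conv_lhs => rw [hb (g (b 2))]
    rw [e12, e02]; simp
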